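/- Let Val be a finite set with v = |Val| ≥ 2, let Z be a finite set, let ε > 0, and let M : Val → Z → ℝ be a channel matrix such that M a z ≤ exp(ε) · M a' z for ALL pairs a, a' ∈ Val and all z ∈ Z (i.e. M satisfies ε-differential privacy with respect to the clique adjacency on Val, as holds for the channel describing a single individual's value when all other database entries are fixed). Then ∑_{z ∈ Z} max_{a ∈ Val} M a z ≤ v · exp(ε) / (v − 1 + exp(ε)); equivalently, the min-entropy leakage about the individual satisfies I∞(V; Z) ≤ log₂(v · exp(ε) / (v − 1 + exp(ε))) for every input distribution. -/

import Mathlib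

/-- **leakage about an individual.** Let `Val` be the set of `v ≥ 2`
possible values of a single individual, and let `M` be a channel matrix on `Val × Z`
satisfying `ε`-differential privacy with respect to the clique adjacency on `Val`
(i.e. `M a z ≤ e^ε * M a' z` for all pairs `a, a'`). Then
`∑_z max_a M a z ≤ v e^ε / (v - 1 + e^ε)`; equivalently, the min-entropy leakage about
the individual (maximized by the uniform input distribution, where it equals
`log₂ (∑_z max_a M a z)`) is at most `log₂ (v e^ε / (v - 1 + e^ε))`. -/
theorem dp_individual_leakage_bound
    (Val : Type*) [Fintype Val] {Z : Type*} [Fintype Z]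
    (hv : 2 ≤ Fintype.card Val)
    (ε : ℝ) (hε : 0 < ε) (M : Val → Z → ℝ)
    (hnn : ∀ a z, 0 ≤ M a z) (hrow : ∀ a, ∑ z, M a z = 1)
    (hdp : ∀ a a' : Val, ∀ z, M a z ≤ Real.exp ε * M a' z) :
    (∑ z, ⨆ a, M a z) ≤
      (Fintype.card Val : ℝ) * Real.exp ε /
        ((Fintype.card Val : ℝ) - 1 + Real.exp ε) ∧
    Real.logb 2 (∑ z, ⨆ a, M a z) ≤
      Real.logb 2 ((Fintype.card Val : ℝ) * Real.exp ε /
        ((Fintype.card Val : ℝ) - 1 + Real.exp ε)) := by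
  classical
  have hne : Nonempty Val := Fintype.card_pos_iff.mp (by omega)
  set v : ℝ := (Fintype.card Val : ℝ) with hvdef
  have hv1 : (1:ℝ) ≤ v - 1 := by
    have : (2:ℝ) ≤ v := by rw [hvdef]; exact_mod_cast hv
    linarith
  set E := Real.exp ε with hE
  have hEpos : 0 < E := Real.exp_pos ε
  have hE1 : 1 ≤ E := Real.one_le_exp hε.le
  have hden : 0 < v - 1 + E := by linarith
  -- pointwise bound per z
  have key : ∀ z, (⨆ a, M a z) * ((v - 1 + E) / E) ≤ ∑ a, M a z := by
    intro z
    obtain ⟨a₀, ha₀⟩ := Finite.exists_max (fun a => M a z)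
    have hS : (⨆ a, M a z) = M a₀ z := by
      refine le_antisymm (ciSup_le ha₀) (le_ciSup (f := fun a => M a z) (Finite.bddAbove_range _) a₀)
    have hSnn : 0 ≤ M a₀ z := hnn a₀ z
    have hlow : ∀ a, M a₀ z / E ≤ M a z := by
      intro a
      rw [div_le_iff₀ hEpos]
      calc M a₀ z ≤ E * M a z := hdp a₀ a z
        _ = M a z * E := mul_comm _ _
    have hsum : (Finset.univ.erase a₀).card • (M a₀ z / E) ≤
        ∑ a ∈ Finset.univ.erase a₀, M a z :=
      Finset.card_nsmul_le_sum _ _ _ (fun a _ => hlow a)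
    have hcard : ((Finset.univ.erase a₀).card : ℝ) = v - 1 := by
      rw [Finset.card_erase_of_mem (Finset.mem_univ a₀)]
      have h1 : 1 ≤ Fintype.card Val := by omega
      rw [Finset.card_univ, Nat.cast_sub h1, Nat.cast_one]
    have hsplit : ∑ a, M a z = M a₀ z + ∑ a ∈ Finset.univ.erase a₀, M a z := by
      rw [← Finset.add_sum_erase _ _ (Finset.mem_univ a₀)]
    rw [hS, hsplit]
    have hsum' : (v - 1) * (M a₀ z / E) ≤ ∑ a ∈ Finset.univ.erase a₀, M a z := by
      rw [← hcard]
      simpa [nsmul_eq_mul] using hsum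
    have : M a₀ z * ((v - 1 + E) / E) = M a₀ z + (v - 1) * (M a₀ z / E) := by
      field_simp
      ring
    rw [this]
    linarith
  have htot : (∑ z, ⨆ a, M a z) * ((v - 1 + E) / E) ≤ v := by
    rw [Finset.sum_mul]
    calc ∑ z, (⨆ a, M a z) * ((v - 1 + E) / E)
        ≤ ∑ z, ∑ a, M a z := Finset.sum_le_sum (fun z _ => key z)
      _ = ∑ a, ∑ z, M a z := Finset.sum_comm
      _ = ∑ a : Val, (1:ℝ) := by simp [hrow]
      _ = v := by simp [hvdef]
  have hcpos : 0 < (v - 1 + E) / E := div_pos hden hEpos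
  have hmain : (∑ z, ⨆ a, M a z) ≤ v * E / (v - 1 + E) := by
    rw [le_div_iff₀ hden]
    have := (le_div_iff₀ hcpos).mpr htot
    calc (∑ z, ⨆ a, M a z) * (v - 1 + E)
        = ((∑ z, ⨆ a, M a z) * ((v - 1 + E) / E)) * E := by field_simp
      _ ≤ v * E := by nlinarith [htot, hEpos]
  refine ⟨hmain, ?_⟩
  have hpos : (0:ℝ) < ∑ z, ⨆ a, M a z := by
    have a₀ : Val := Classical.arbitrary Val
    have hle : ∀ z, M a₀ z ≤ ⨆ a, M a z :=
      fun z => le_ciSup (f := fun a => M a z) (Finite.bddAbove_range _) a₀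
    have : (1:ℝ) ≤ ∑ z, ⨆ a, M a z := by
      rw [← hrow a₀]; exact Finset.sum_le_sum (fun z _ => hle z)
    linarith
  exact Real.logb_le_logb_of_le one_lt_two hpos hmain
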